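/- For m ≥ 1, the polynomial p_{2m}(k) = k^{2m} + k^{2m−1} − 1 has exactly two real roots: one, c_{2m,0}, lies in (0,1), and the other, c_{2m,1}, lies in (−2, −1). Furthermore, q_{2m}(k) = k^{2m} + k^{2m−1} − 2 has a unique root c_{2m,2} in [−2, c_{2m,1}), and q_{2m}(x) > 0 for x < c_{2m,2} while q_{2m}(y) < 0 for y ∈ (c_{2m,2}, −1). -/

import Mathlib

open Set

private def Faux (k : ℕ) (x : ℝ) : ℝ := x ^ (2*k+2) + x ^ (2*k+1) - 1

private noncomputable def Aaux (k : ℕ) : ℝ := -((2*k+1 : ℝ)) / (2*k+2)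

private lemma Faux_cont (k : ℕ) : Continuous (Faux k) := by
  unfold Faux; continuity

private lemma Aaux_neg (k : ℕ) : Aaux k < 0 := by
  unfold Aaux
  apply div_neg_of_neg_of_pos <;> [skip; positivity]
  have : (0:ℝ) < 2*k+1 := by positivity
  linarith

private lemma Aaux_ge (k : ℕ) : (-1 : ℝ) ≤ Aaux k := by
  unfold Aaux
  rw [neg_div, neg_le_neg_iff, div_le_one (by positivity)]
  linarith

private lemma Faux_deriv (k : ℕ) (x : ℝ) :
    HasDerivAt (Faux k) (x ^ (2*k) * ((2*k+2)*x + (2*k+1))) x := by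
  have h := ((hasDerivAt_pow (2*k+2) x).add (hasDerivAt_pow (2*k+1) x)).sub_const 1
  refine h.congr_deriv ?_
  have e1 : 2*k+2-1 = 2*k+1 := by omega
  have e2 : 2*k+1-1 = 2*k := by omega
  rw [e1, e2]; push_cast; ring

private lemma Aaux_mul (k : ℕ) : ((2*k+2 : ℝ)) * Aaux k = -(2*k+1) := by
  unfold Aaux; field_simp

private lemma Faux_anti (k : ℕ) : StrictAntiOn (Faux k) (Iic (Aaux k)) := by
  apply strictAntiOn_of_deriv_neg (convex_Iic _) (Faux_cont k).continuousOn
  intro x hx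
  rw [interior_Iic] at hx
  rw [(Faux_deriv k x).deriv]
  have hx0 : x ≠ 0 := ne_of_lt (hx.trans (Aaux_neg k))
  have h1 : 0 < x ^ (2*k) := Even.pow_pos (even_two_mul k) hx0
  have h2 : (2*k+2 : ℝ) * x < (2*k+2) * Aaux k :=
    mul_lt_mul_of_pos_left hx (by positivity)
  rw [Aaux_mul] at h2
  have : (2*k+2:ℝ)*x + (2*k+1) < 0 := by linarith
  exact mul_neg_of_pos_of_neg h1 this

private lemma glue_mono {f : ℝ → ℝ} {a b : ℝ} (hab : a ≤ b)
    (h1 : StrictMonoOn f (Icc a b)) (h2 : StrictMonoOn f (Ici b)) :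
    StrictMonoOn f (Ici a) := by
  intro x hx y hy hxy
  rcases le_total y b with hyb | hby
  · exact h1 ⟨hx, hxy.le.trans hyb⟩ ⟨hy, hyb⟩ hxy
  · rcases lt_or_ge x b with hxb | hbx
    · have fxb : f x < f b := h1 ⟨hx, hxb.le⟩ ⟨hab, le_refl b⟩ hxb
      rcases eq_or_lt_of_le hby with rfl | hby'
      · exact fxb
      · exact fxb.trans (h2 self_mem_Ici hby'.le hby')
    · exact h2 hbx (hbx.trans hxy.le) hxy

private lemma Faux_mono (k : ℕ) : StrictMonoOn (Faux k) (Ici (Aaux k)) := by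
  apply glue_mono (Aaux_neg k).le
  · apply strictMonoOn_of_deriv_pos (convex_Icc _ _) (Faux_cont k).continuousOn
    intro x hx
    rw [interior_Icc] at hx
    rw [(Faux_deriv k x).deriv]
    have hx0 : x ≠ 0 := ne_of_lt hx.2
    have h1 : 0 < x ^ (2*k) := Even.pow_pos (even_two_mul k) hx0
    have h2 : (2*k+2 : ℝ) * Aaux k < (2*k+2) * x :=
      mul_lt_mul_of_pos_left hx.1 (by positivity)
    rw [Aaux_mul] at h2
    have : 0 < (2*k+2:ℝ)*x + (2*k+1) := by linarith
    positivity
  · apply strictMonoOn_of_deriv_pos (convex_Ici _) (Faux_cont k).continuousOn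
    intro x hx
    rw [interior_Ici] at hx
    rw [(Faux_deriv k x).deriv]
    have h1 : 0 < x ^ (2*k) := pow_pos hx _
    have h2 : (0:ℝ) < 2*k+1 := by positivity
    have h3 : (0:ℝ) < (2*k+2:ℝ) * x := mul_pos (by positivity) hx
    exact mul_pos h1 (by linarith)

theorem p2m_q2m_roots (m : ℕ) (hm : 1 ≤ m) :
    ∃ c0 ∈ Set.Ioo (0 : ℝ) 1, ∃ c1 ∈ Set.Ioo (-2 : ℝ) (-1),
      c0 ^ (2 * m) + c0 ^ (2 * m - 1) - 1 = 0 ∧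
      c1 ^ (2 * m) + c1 ^ (2 * m - 1) - 1 = 0 ∧
      (∀ x : ℝ, x ^ (2 * m) + x ^ (2 * m - 1) - 1 = 0 → x = c0 ∨ x = c1) ∧
      ∃ c2 ∈ Set.Ico (-2 : ℝ) c1,
        c2 ^ (2 * m) + c2 ^ (2 * m - 1) - 2 = 0 ∧
        (∀ x ∈ Set.Ico (-2 : ℝ) c1, x ^ (2 * m) + x ^ (2 * m - 1) - 2 = 0 → x = c2) ∧
        (∀ x : ℝ, x < c2 → 0 < x ^ (2 * m) + x ^ (2 * m - 1) - 2) ∧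
        (∀ y ∈ Set.Ioo c2 (-1 : ℝ), y ^ (2 * m) + y ^ (2 * m - 1) - 2 < 0) := by
  obtain ⟨k, rfl⟩ : ∃ k, m = k + 1 := ⟨m - 1, by omega⟩
  have e1 : 2 * (k+1) = 2*k+2 := by ring
  have e2 : 2 * (k+1) - 1 = 2*k+1 := by omega
  rw [e2, e1]
  have hFe : ∀ x : ℝ, x ^ (2*k+2) + x ^ (2*k+1) - 1 = Faux k x := fun x => rfl
  have hQe : ∀ x : ℝ, x ^ (2*k+2) + x ^ (2*k+1) - 2 = Faux k x - 1 := by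
    intro x; unfold Faux; ring
  -- evaluations
  have hpow2 : (2:ℝ) ≤ 2 ^ (2*k+1) := by
    calc (2:ℝ) = 2^1 := (pow_one 2).symm
    _ ≤ 2^(2*k+1) := pow_le_pow_right₀ one_le_two (by omega)
  have hF0 : Faux k 0 = -1 := by unfold Faux; rw [zero_pow (by omega), zero_pow (by omega)]; ring
  have hF1 : Faux k 1 = 1 := by unfold Faux; simp
  have hFm1 : Faux k (-1) = -1 := by
    unfold Faux
    rw [Even.neg_pow ⟨k+1, by ring⟩, Odd.neg_pow ⟨k, by ring⟩]
    norm_num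
  have hFm2 : Faux k (-2) = 2 ^ (2*k+1) - 1 := by
    unfold Faux
    rw [Even.neg_pow ⟨k+1, by ring⟩, Odd.neg_pow ⟨k, by ring⟩, pow_succ 2 (2*k+1)]
    ring
  -- existence of c0
  obtain ⟨c0, hc0m, hc0⟩ : ∃ c0 ∈ Ioo (0:ℝ) 1, Faux k c0 = 0 := by
    have h := intermediate_value_Ioo (by norm_num : (0:ℝ) ≤ 1) (Faux_cont k).continuousOn
    obtain ⟨c, hc, hce⟩ := h (show (0:ℝ) ∈ Ioo (Faux k 0) (Faux k 1) by
      rw [hF0, hF1]; exact ⟨by norm_num, by norm_num⟩)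
    exact ⟨c, hc, hce⟩
  -- existence of c1
  obtain ⟨c1, hc1m, hc1⟩ : ∃ c1 ∈ Ioo (-2:ℝ) (-1), Faux k c1 = 0 := by
    have h := intermediate_value_Ioo' (by norm_num : (-2:ℝ) ≤ -1) (Faux_cont k).continuousOn
    obtain ⟨c, hc, hce⟩ := h (show (0:ℝ) ∈ Ioo (Faux k (-1)) (Faux k (-2)) by
      rw [hFm1, hFm2]; exact ⟨by norm_num, by linarith⟩)
    exact ⟨c, hc, hce⟩
  have hc1a : c1 ∈ Iic (Aaux k) := le_trans hc1m.2.le (Aaux_ge k)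
  have hc0a : c0 ∈ Ici (Aaux k) := le_of_lt ((Aaux_neg k).trans hc0m.1)
  refine ⟨c0, hc0m, c1, hc1m, by rw [hFe]; exact hc0, by rw [hFe]; exact hc1, ?_, ?_⟩
  · -- uniqueness of roots of F
    intro x hx
    rw [hFe] at hx
    rcases le_total x (Aaux k) with hxa | hax
    · right
      exact (Faux_anti k).injOn hxa hc1a (by rw [hx, hc1])
    · left
      exact (Faux_mono k).injOn hax hc0a (by rw [hx, hc0])
  · -- c2 part
    obtain ⟨c2, hc2m, hc2⟩ : ∃ c2 ∈ Ico (-2:ℝ) c1, Faux k c2 - 1 = 0 := by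
      have h := intermediate_value_Ico' (le_of_lt hc1m.1)
        ((Faux_cont k).sub continuous_const).continuousOn
        (f := fun x => Faux k x - 1)
      obtain ⟨c, hc, hce⟩ := h (show (0:ℝ) ∈ Ioc (Faux k c1 - 1) (Faux k (-2) - 1) by
        rw [hc1, hFm2]; exact ⟨by norm_num, by linarith⟩)
      exact ⟨c, hc, hce⟩
    have hc2a : c2 ∈ Iic (Aaux k) :=
      le_trans hc2m.2.le (le_trans hc1m.2.le (Aaux_ge k))
    refine ⟨c2, hc2m, by rw [hQe]; exact hc2, ?_, ?_, ?_⟩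
    · intro x hxm hx
      rw [hQe] at hx
      have hxa : x ∈ Iic (Aaux k) := le_trans hxm.2.le (le_trans hc1m.2.le (Aaux_ge k))
      exact (Faux_anti k).injOn hxa hc2a (by linarith)
    · intro x hx
      rw [hQe]
      have := (Faux_anti k) (hx.le.trans hc2a) hc2a hx
      linarith
    · intro y hy
      rw [hQe]
      have hya : y ∈ Iic (Aaux k) := le_trans hy.2.le (Aaux_ge k)
      have := (Faux_anti k) hc2a hya hy.1
      linarith
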